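/- Let G = (U, V, E) be a bipartite graph with |U| = |V| = N containing a perfect matching, such that for every non-maximal matching M there exists an augmenting path for M of length at most 2L + 1. Then the fast matching algorithm terminates within T ≤ N(L + 1) iterations. -/

import Mathlib

/-- State of the fast matching algorithm on a bipartite graph with left and right
vertex sets `Fin N`: a partial matching (each left vertex is matched to at most one
right vertex) and a counter `h v` for each right vertex `v`. -/
structure FMState (N : ℕ) where
  matching : Fin N → Option (Fin N)
  h : Fin N → ℕ

/-- Initial state: empty matching, all counters zero. -/
def FMInit (N : ℕ) : FMState N := ⟨fun _ => none, fun _ => 0⟩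

/-- One iteration of the fast matching algorithm for the bipartite graph with edge
relation `E`: a free left vertex `u` is matched to a neighbor `j` whose counter is
minimal among `u`'s neighbors; the previous partner of `j` (if any) becomes free,
and the counter of `j` is incremented. -/
def FMStep {N : ℕ} (E : Fin N → Fin N → Prop) (s s' : FMState N) : Prop :=
  ∃ u j, s.matching u = none ∧ E u j ∧ (∀ k, E u k → s.h j ≤ s.h k) ∧
    s'.h = Function.update s.h j (s.h j + 1) ∧
    s'.matching = fun u' => if u' = u then some j
      else if s.matching u' = some j then none else s.matching u'

/-- `m` is a (partial) matching of the bipartite graph `E`: matched pairs are edges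
and no right vertex is matched to two left vertices. -/
def IsMatching {N : ℕ} (E : Fin N → Fin N → Prop) (m : Fin N → Option (Fin N)) : Prop :=
  (∀ u j, m u = some j → E u j) ∧ ∀ u u' j, m u = some j → m u' = some j → u = u'

/-- An augmenting path of length `2k+1` (edges) with respect to the matching `m`,
given by left vertices `u 0, …, u k` and right vertices `v 0, …, v k`:
it starts at the free vertex `u 0`, the edges `(u i, v i)` are in the graph,
the edges `(u (i+1), v i)` are matched, it ends at the free right vertex `v k`,
and all vertices along the path are distinct. -/
def AugPath {N : ℕ} (E : Fin N → Fin N → Prop) (m : Fin N → Option (Fin N)) (k : ℕ)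
    (u v : ℕ → Fin N) : Prop :=
  m (u 0) = none ∧
  (∀ i ≤ k, E (u i) (v i)) ∧
  (∀ i < k, m (u (i + 1)) = some (v i)) ∧
  (∀ u', m u' ≠ some (v k)) ∧
  (∀ i ≤ k, ∀ j ≤ k, u i = u j → i = j) ∧
  (∀ i ≤ k, ∀ j ≤ k, v i = v j → i = j)

namespace FMAux

variable {N : ℕ}

/-- Augment the matching `m` along the path given by `us`, `vs` (up to index `k`). -/
noncomputable def aug (m : Fin N → Option (Fin N)) (k : ℕ) (us vs : ℕ → Fin N) :
    Fin N → Option (Fin N) :=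
  fun x => if h : ∃ i, i ≤ k ∧ us i = x then some (vs (Classical.choose h)) else m x

lemma aug_cases (m : Fin N → Option (Fin N)) (k : ℕ) (us vs : ℕ → Fin N)
    (hinj : ∀ i ≤ k, ∀ j ≤ k, us i = us j → i = j) (x : Fin N) :
    (∃ i, i ≤ k ∧ us i = x ∧ aug m k us vs x = some (vs i)) ∨
      ((∀ i ≤ k, us i ≠ x) ∧ aug m k us vs x = m x) := by
  by_cases h : ∃ i, i ≤ k ∧ us i = x
  · left
    obtain ⟨i, hi, hx⟩ := h
    refine ⟨i, hi, hx, ?_⟩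
    have h' : ∃ i, i ≤ k ∧ us i = x := ⟨i, hi, hx⟩
    have hs := Classical.choose_spec h'
    have : Classical.choose h' = i := by
      apply hinj _ hs.1 _ hi
      rw [hs.2, hx]
    simp only [aug, dif_pos h', this]
  · right
    refine ⟨fun i hi hx => h ⟨i, hi, hx⟩, ?_⟩
    simp only [aug, dif_neg h]

lemma aug_apply_mem (m : Fin N → Option (Fin N)) (k : ℕ) (us vs : ℕ → Fin N)
    (hinj : ∀ i ≤ k, ∀ j ≤ k, us i = us j → i = j) {i : ℕ} (hi : i ≤ k) :
    aug m k us vs (us i) = some (vs i) := by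
  rcases aug_cases m k us vs hinj (us i) with ⟨i', hi', hx, he⟩ | ⟨hno, _⟩
  · have : i' = i := hinj _ hi' _ hi hx
    rw [he, this]
  · exact absurd rfl (hno i hi)

variable {E : Fin N → Fin N → Prop}

lemma aug_isMatching {m : Fin N → Option (Fin N)} {k : ℕ} {us vs : ℕ → Fin N}
    (hm : IsMatching E m) (hP : AugPath E m k us vs) :
    IsMatching E (aug m k us vs) := by
  obtain ⟨h0, hE, hmatch, hfree, huinj, hvinj⟩ := hP
  constructor
  · intro x j hx
    rcases aug_cases m k us vs huinj x with ⟨i, hi, hxi, he⟩ | ⟨hno, he⟩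
    · rw [he] at hx
      rw [← hxi]
      cases hx
      exact hE i hi
    · rw [he] at hx
      exact hm.1 x j hx
  · intro x x' j hx hx'
    rcases aug_cases m k us vs huinj x with ⟨i, hi, hxi, he⟩ | ⟨hno, he⟩ <;>
      rcases aug_cases m k us vs huinj x' with ⟨i', hi', hxi', he'⟩ | ⟨hno', he'⟩
    · rw [he] at hx; rw [he'] at hx'
      have h1 : vs i = j := by injection hx
      have h2 : vs i' = j := by injection hx'
      rw [← hxi, ← hxi']
      congr 1
      exact hvinj i hi i' hi' (h1.trans h2.symm)
    · -- x = us i ↦ vs i, x' unmoved with m x' = some (vs i)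
      rw [he] at hx; rw [he'] at hx'
      cases hx
      rcases Nat.lt_or_ge i k with hik | hik
      · have := hm.2 x' (us (i+1)) (vs i) hx' (hmatch i hik)
        exact absurd this.symm (hno' (i+1) (by omega))
      · have : i = k := le_antisymm hi hik
        subst this
        exact absurd hx' (hfree x')
    · rw [he] at hx; rw [he'] at hx'
      cases hx'
      rcases Nat.lt_or_ge i' k with hik | hik
      · have := hm.2 x (us (i'+1)) (vs i') hx (hmatch i' hik)
        exact absurd this.symm (hno (i'+1) (by omega))
      · have : i' = k := le_antisymm hi' hik
        subst this
        exact absurd hx (hfree x)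
    · rw [he] at hx; rw [he'] at hx'
      exact hm.2 x x' j hx hx'

lemma aug_cov {m : Fin N → Option (Fin N)} {k : ℕ} {us vs : ℕ → Fin N}
    (huinj : ∀ i ≤ k, ∀ j ≤ k, us i = us j → i = j) (x : Fin N)
    (hx : (m x).isSome) : ((aug m k us vs) x).isSome := by
  rcases aug_cases m k us vs huinj x with ⟨i, hi, hxi, he⟩ | ⟨hno, he⟩
  · rw [he]; rfl
  · rw [he]; exact hx

lemma aug_none_iff {m : Fin N → Option (Fin N)} {k : ℕ} {us vs : ℕ → Fin N}
    (hP : AugPath E m k us vs) (x : Fin N) :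
    aug m k us vs x = none ↔ (m x = none ∧ x ≠ us 0) := by
  obtain ⟨h0, hE, hmatch, hfree, huinj, hvinj⟩ := hP
  rcases aug_cases m k us vs huinj x with ⟨i, hi, hxi, he⟩ | ⟨hno, he⟩
  · rw [he]
    simp only [reduceCtorEq, false_iff, not_and, ne_eq, not_not]
    intro hmx
    rcases Nat.eq_zero_or_pos i with h | h
    · rw [← hxi, h]
    · exfalso
      have : m (us i) = some (vs (i-1)) := by
        have := hmatch (i-1) (by omega)
        rwa [Nat.sub_add_cancel h] at this
      rw [hxi, hmx] at this
      cases this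
  · rw [he]
    have : x ≠ us 0 := fun h => hno 0 (Nat.zero_le _) h.symm
    simp [this]

lemma aug_ne {m : Fin N → Option (Fin N)} {k : ℕ} {us vs : ℕ → Fin N}
    (huinj : ∀ i ≤ k, ∀ j ≤ k, us i = us j → i = j) (x : Fin N)
    (hx : aug m k us vs x ≠ m x) : ∃ i ≤ k, us i = x := by
  rcases aug_cases m k us vs huinj x with ⟨i, hi, hxi, he⟩ | ⟨hno, he⟩
  · exact ⟨i, hi, hxi⟩
  · exact absurd he hx

lemma walk (m M : Fin N → Option (Fin N)) (hM : IsMatching E M)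
    (hcov : ∀ x, (m x).isSome → (M x).isSome) (u : Fin N) (hu : m u = none)
    (huM : (M u).isSome) :
    ∃ t : ℕ, ∃ xs ws : ℕ → Fin N, xs 0 = u ∧ (∀ i ≤ t, M (xs i) = some (ws i)) ∧
      (∀ i < t, m (xs (i + 1)) = some (ws i)) ∧ (∀ x, m x ≠ some (ws t)) ∧
      (∀ i ≤ t, ∀ j ≤ t, ws i = ws j → i = j) := by
  classical
  set P : ℕ → Prop := fun t => ∃ xs ws : ℕ → Fin N, xs 0 = u ∧
      (∀ i ≤ t, M (xs i) = some (ws i)) ∧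
      (∀ i < t, m (xs (i + 1)) = some (ws i)) ∧
      (∀ i ≤ t, ∀ j ≤ t, ws i = ws j → i = j) with hPdef
  have hP0 : P 0 := by
    obtain ⟨w, hw⟩ := Option.isSome_iff_exists.mp huM
    exact ⟨fun _ => u, fun _ => w, rfl, fun i _ => hw, fun i hi => absurd hi (Nat.not_lt_zero i),
      fun i hi j hj _ => by omega⟩
  have hPN : ¬ P N := by
    rintro ⟨xs, ws, -, -, -, hinj⟩
    have hinj' : Set.InjOn ws (Finset.range (N + 1)) := by
      intro i hi j hj hij
      simp only [Finset.coe_range, Set.mem_Iio] at hi hj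
      exact hinj i (by omega) j (by omega) hij
    have h1 : ((Finset.range (N + 1)).image ws).card = N + 1 := by
      rw [Finset.card_image_of_injOn hinj', Finset.card_range]
    have h2 : ((Finset.range (N + 1)).image ws).card ≤ N := by
      have := Finset.card_le_univ ((Finset.range (N + 1)).image ws)
      simpa using this
    omega
  have hex : ∃ t, ¬ P t := ⟨N, hPN⟩
  set t1 := Nat.find hex with ht1
  have ht1pos : 0 < t1 := by
    rcases Nat.eq_zero_or_pos t1 with h | h
    · exact absurd (h ▸ Nat.find_spec hex) (not_not.mpr hP0)
    · exact h
  set t := t1 - 1 with htdef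
  have hPt : P t := not_not.mp (Nat.find_min hex (by omega))
  have hPt1 : ¬ P (t + 1) := by
    have : t + 1 = t1 := by omega
    rw [this]
    exact Nat.find_spec hex
  obtain ⟨xs, ws, hx0, hMxs, hmxs, hinj⟩ := hPt
  refine ⟨t, xs, ws, hx0, hMxs, hmxs, ?_, hinj⟩
  intro x' hx'
  apply hPt1
  have hx'S : (M x').isSome := hcov x' (by rw [hx']; rfl)
  obtain ⟨w', hw'⟩ := Option.isSome_iff_exists.mp hx'S
  refine ⟨fun i => if i ≤ t then xs i else x', fun i => if i ≤ t then ws i else w',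
    by simp [Nat.zero_le, hx0], ?_, ?_, ?_⟩
  · intro i hi
    by_cases h : i ≤ t
    · simp [h, hMxs i h]
    · simp [h, hw']
  · intro i hi
    by_cases h : i < t
    · simp [Nat.le_of_lt h, show i + 1 ≤ t by omega, hmxs i h]
    · have hit : i = t := by omega
      show m (if i + 1 ≤ t then xs (i + 1) else x') = some (if i ≤ t then ws i else w')
      rw [hit, if_neg (show ¬ (t + 1 ≤ t) by omega), if_pos (le_refl t)]
      exact hx'
  · intro i hi j hj hij
    replace hij : (if i ≤ t then ws i else w') = (if j ≤ t then ws j else w') := hij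
    by_cases h1 : i ≤ t <;> by_cases h2 : j ≤ t
    · simp only [h1, h2, if_pos] at hij
      exact hinj i h1 j h2 hij
    · exfalso
      rw [if_pos h1, if_neg h2] at hij
      -- ws i = w'
      have hMeq : M (xs i) = M x' := by rw [hMxs i h1, hw', hij]
      have hxsi : xs i = x' := by
        obtain ⟨z, hz⟩ := Option.isSome_iff_exists.mp hx'S
        exact hM.2 (xs i) x' z (by rw [hMeq, hz]) hz
      rcases Nat.eq_zero_or_pos i with hi0 | hi0
      · rw [hi0, hx0] at hxsi
        rw [← hxsi, hu] at hx'
        cases hx'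
      · have h3 : m (xs i) = some (ws (i - 1)) := by
          have := hmxs (i - 1) (by omega)
          rwa [Nat.sub_add_cancel hi0] at this
        rw [hxsi, hx'] at h3
        have : ws (i - 1) = ws t := by injection h3.symm
        have := hinj (i - 1) (by omega) t le_rfl this
        omega
    · exfalso
      rw [if_neg h1, if_pos h2] at hij
      have hMeq : M (xs j) = M x' := by rw [hMxs j h2, hw', hij]
      have hxsj : xs j = x' := by
        obtain ⟨z, hz⟩ := Option.isSome_iff_exists.mp hx'S
        exact hM.2 (xs j) x' z (by rw [hMeq, hz]) hz
      rcases Nat.eq_zero_or_pos j with hj0 | hj0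
      · rw [hj0, hx0] at hxsj
        rw [← hxsj, hu] at hx'
        cases hx'
      · have h3 : m (xs j) = some (ws (j - 1)) := by
          have := hmxs (j - 1) (by omega)
          rwa [Nat.sub_add_cancel hj0] at this
        rw [hxsj, hx'] at h3
        have : ws (j - 1) = ws t := by injection h3.symm
        have := hinj (j - 1) (by omega) t le_rfl this
        omega
    · omega

lemma strongClaim (L : ℕ)
    (haug : ∀ m, IsMatching E m → ¬(∀ u, (m u).isSome) →
      ∃ k ≤ L, ∃ u v, AugPath E m k u v) :
    ∀ n (m : Fin N → Option (Fin N)), IsMatching E m →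
      (Finset.univ.filter (fun x => m x = none)).card ≤ n → ∀ u, m u = none →
      ∃ k ≤ L, ∃ us vs : ℕ → Fin N, AugPath E m k us vs ∧ us 0 = u := by
  classical
  intro n
  induction n with
  | zero =>
    intro m hm hcard u hu
    exfalso
    have hmem : u ∈ Finset.univ.filter (fun x => m x = none) := by simp [hu]
    have := Finset.card_pos.mpr ⟨u, hmem⟩
    omega
  | succ n IH =>
    intro m hm hcard u hu
    have hnp : ¬ ∀ x, (m x).isSome := by
      intro H
      have := H u
      rw [hu] at this
      simp at this
    obtain ⟨k, hkL, us1, vs1, hP1⟩ := haug m hm hnp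
    have hexp : ∃ k, ∃ us vs : ℕ → Fin N, AugPath E m k us vs := ⟨k, us1, vs1, hP1⟩
    set k₀ := Nat.find hexp with hk₀
    have hk₀L : k₀ ≤ L := le_trans (Nat.find_min' hexp ⟨us1, vs1, hP1⟩) hkL
    obtain ⟨us, vs, hP⟩ := Nat.find_spec hexp
    by_cases h0 : us 0 = u
    · exact ⟨k₀, hk₀L, us, vs, hP, h0⟩
    set m' := aug m k₀ us vs with hm'def
    have hm' : IsMatching E m' := aug_isMatching hm hP
    have hcard' : (Finset.univ.filter (fun x => m' x = none)).card ≤ n := by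
      have hset : Finset.univ.filter (fun x => m' x = none) =
          (Finset.univ.filter (fun x => m x = none)).erase (us 0) := by
        ext x
        simp only [Finset.mem_filter, Finset.mem_univ, true_and, Finset.mem_erase, ne_eq]
        rw [hm'def, aug_none_iff hP x]
        tauto
      have hmem : us 0 ∈ Finset.univ.filter (fun x => m x = none) := by simp [hP.1]
      rw [hset, Finset.card_erase_of_mem hmem]
      have := Finset.card_pos.mpr ⟨us 0, hmem⟩
      omega
    have hu' : m' u = none := by
      rw [hm'def, aug_none_iff hP u]
      exact ⟨hu, fun h => h0 h.symm⟩
    obtain ⟨k', hk'L, qs, ws', hQ, hq0⟩ := IH m' hm' hcard' u hu'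
    -- surgery: double augment and walk
    have hQinj := hQ.2.2.2.2.1
    have hPinj := hP.2.2.2.2.1
    set m'' := aug m' k' qs ws' with hm''def
    have hm'' : IsMatching E m'' := aug_isMatching hm' hQ
    have hcov : ∀ x, (m x).isSome → (m'' x).isSome := fun x hx =>
      aug_cov hQinj x (aug_cov hPinj x hx)
    have huM : (m'' u).isSome := by
      have h1 : m'' (qs 0) = some (ws' 0) := aug_apply_mem m' k' qs ws' hQinj (Nat.zero_le k')
      rw [hq0] at h1
      rw [h1]
      rfl
    obtain ⟨t, xs, zs, hx0, hMx, hmx, hfree, hzinj⟩ := walk m m'' hm'' hcov u hu huM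
    have hu0 : m (us 0) = none := hP.1
    have hu0M : (m'' (us 0)).isSome := by
      have h1 : m' (us 0) = some (vs 0) := aug_apply_mem m k₀ us vs hPinj (Nat.zero_le k₀)
      exact aug_cov hQinj _ (by rw [h1]; rfl)
    obtain ⟨t₀, ys, zs₀, hy0, hMy, hmy, hfree₀, hz₀inj⟩ := walk m m'' hm'' hcov (us 0) hu0 hu0M
    have hxsinj : ∀ i ≤ t, ∀ j ≤ t, xs i = xs j → i = j := by
      intro i hi j hj hij
      have h1 := hMx i hi
      have h2 := hMx j hj
      rw [hij, h2] at h1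
      exact hzinj i hi j hj (by injection h1.symm)
    have hysinj : ∀ i ≤ t₀, ∀ j ≤ t₀, ys i = ys j → i = j := by
      intro i hi j hj hij
      have h1 := hMy i hi
      have h2 := hMy j hj
      rw [hij, h2] at h1
      exact hz₀inj i hi j hj (by injection h1.symm)
    have hApx : AugPath E m t xs zs :=
      ⟨by rw [hx0]; exact hu, fun i hi => hm''.1 _ _ (hMx i hi), hmx, hfree, hxsinj, hzinj⟩
    have hApy : AugPath E m t₀ ys zs₀ :=
      ⟨by rw [hy0]; exact hu0, fun i hi => hm''.1 _ _ (hMy i hi), hmy, hfree₀, hysinj, hz₀inj⟩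
    have ht₀ : k₀ ≤ t₀ := Nat.find_min' hexp ⟨ys, zs₀, hApy⟩
    -- counting
    set Δ := Finset.univ.filter (fun x => m'' x ≠ m x) with hΔ
    have hxsΔ : ∀ i ≤ t, xs i ∈ Δ := by
      intro i hi
      simp only [hΔ, Finset.mem_filter, Finset.mem_univ, true_and, ne_eq]
      rcases Nat.eq_zero_or_pos i with h | h
      · subst h
        rw [hMx 0 (Nat.zero_le t), hx0, hu]
        simp
      · rw [hMx i hi]
        have h1 : m (xs i) = some (zs (i - 1)) := by
          have := hmx (i - 1) (by omega)
          rwa [Nat.sub_add_cancel h] at this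
        rw [h1]
        intro hc
        have h2 : zs i = zs (i - 1) := by injection hc
        have := hzinj i hi (i - 1) (by omega) h2
        omega
    have hysΔ : ∀ i ≤ t₀, ys i ∈ Δ := by
      intro i hi
      simp only [hΔ, Finset.mem_filter, Finset.mem_univ, true_and, ne_eq]
      rcases Nat.eq_zero_or_pos i with h | h
      · subst h
        rw [hMy 0 (Nat.zero_le t₀), hy0, hu0]
        simp
      · rw [hMy i hi]
        have h1 : m (ys i) = some (zs₀ (i - 1)) := by
          have := hmy (i - 1) (by omega)
          rwa [Nat.sub_add_cancel h] at this
        rw [h1]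
        intro hc
        have h2 : zs₀ i = zs₀ (i - 1) := by injection hc
        have := hz₀inj i hi (i - 1) (by omega) h2
        omega
    have hdisj : ∀ a, ∀ b, a ≤ t → b ≤ t₀ → xs a ≠ ys b := by
      intro a
      induction a with
      | zero =>
        intro b _ hb heq
        rcases Nat.eq_zero_or_pos b with h | h
        · subst h
          rw [hx0, hy0] at heq
          exact h0 heq.symm
        · have h1 : m (ys b) = some (zs₀ (b - 1)) := by
            have := hmy (b - 1) (by omega)
            rwa [Nat.sub_add_cancel h] at this
          rw [← heq, hx0, hu] at h1
          cases h1
      | succ a IHa =>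
        intro b ha hb heq
        have h1 : m (xs (a + 1)) = some (zs a) := hmx a (by omega)
        rcases Nat.eq_zero_or_pos b with h | h
        · subst h
          rw [heq, hy0, hu0] at h1
          cases h1
        · have h2 : m (ys b) = some (zs₀ (b - 1)) := by
            have := hmy (b - 1) (by omega)
            rwa [Nat.sub_add_cancel h] at this
          rw [heq, h2] at h1
          have h3 : zs₀ (b - 1) = zs a := by injection h1
          have h4 := hMx a (by omega)
          have h5 := hMy (b - 1) (by omega)
          have h6 : xs a = ys (b - 1) := hm''.2 _ _ (zs a) h4 (by rw [h5, h3])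
          exact IHa (b - 1) (by omega) (by omega) h6
    have hxsinj' : Set.InjOn xs (Finset.range (t + 1)) := by
      intro i hi j hj hij
      simp only [Finset.coe_range, Set.mem_Iio] at hi hj
      exact hxsinj i (by omega) j (by omega) hij
    have hysinj' : Set.InjOn ys (Finset.range (t₀ + 1)) := by
      intro i hi j hj hij
      simp only [Finset.coe_range, Set.mem_Iio] at hi hj
      exact hysinj i (by omega) j (by omega) hij
    have hAB : Disjoint ((Finset.range (t + 1)).image xs) ((Finset.range (t₀ + 1)).image ys) := by
      rw [Finset.disjoint_left]
      rintro x hx hy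
      simp only [Finset.mem_image, Finset.mem_range] at hx hy
      obtain ⟨i, hi, rfl⟩ := hx
      obtain ⟨j, hj, hji⟩ := hy
      exact hdisj i j (by omega) (by omega) hji.symm
    have hsub : ((Finset.range (t + 1)).image xs) ∪ ((Finset.range (t₀ + 1)).image ys) ⊆ Δ := by
      intro x hx
      rcases Finset.mem_union.mp hx with hx | hx
      · simp only [Finset.mem_image, Finset.mem_range] at hx
        obtain ⟨i, hi, rfl⟩ := hx
        exact hxsΔ i (by omega)
      · simp only [Finset.mem_image, Finset.mem_range] at hx
        obtain ⟨i, hi, rfl⟩ := hx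
        exact hysΔ i (by omega)
    have hΔsub : Δ ⊆ ((Finset.range (k' + 1)).image qs) ∪ ((Finset.range (k₀ + 1)).image us) := by
      intro x hx
      simp only [hΔ, Finset.mem_filter, Finset.mem_univ, true_and, ne_eq] at hx
      by_cases h1 : m'' x = m' x
      · have h2 : m' x ≠ m x := by
          intro hc
          exact hx (h1.trans hc)
        obtain ⟨i, hi, hxi⟩ := aug_ne hPinj x h2
        exact Finset.mem_union_right _
          (Finset.mem_image.mpr ⟨i, Finset.mem_range.mpr (by omega), hxi⟩)
      · obtain ⟨i, hi, hxi⟩ := aug_ne hQinj x h1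
        exact Finset.mem_union_left _
          (Finset.mem_image.mpr ⟨i, Finset.mem_range.mpr (by omega), hxi⟩)
    have hcount1 : t + 1 + (t₀ + 1) ≤ Δ.card := by
      have hc := Finset.card_le_card hsub
      rw [Finset.card_union_of_disjoint hAB, Finset.card_image_of_injOn hxsinj',
        Finset.card_image_of_injOn hysinj', Finset.card_range, Finset.card_range] at hc
      exact hc
    have hcount2 : Δ.card ≤ (k' + 1) + (k₀ + 1) := by
      have hc := Finset.card_le_card hΔsub
      have hc2 := Finset.card_union_le ((Finset.range (k' + 1)).image qs)
        ((Finset.range (k₀ + 1)).image us)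
      have hc3 : ((Finset.range (k' + 1)).image qs).card ≤ k' + 1 :=
        le_trans Finset.card_image_le (le_of_eq (Finset.card_range _))
      have hc4 : ((Finset.range (k₀ + 1)).image us).card ≤ k₀ + 1 :=
        le_trans Finset.card_image_le (le_of_eq (Finset.card_range _))
      omega
    have htk' : t ≤ k' := by omega
    exact ⟨t, le_trans htk' hk'L, xs, zs, hApx, hx0⟩

end FMAux

theorem stmt14 {N T : ℕ} (E : Fin N → Fin N → Prop) (L : ℕ)
    (hpm : ∃ m, IsMatching E m ∧ ∀ u, (m u).isSome)
    (haug : ∀ m, IsMatching E m → ¬(∀ u, (m u).isSome) →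
      ∃ k ≤ L, ∃ u v, AugPath E m k u v)
    (run : ℕ → FMState N) (h0 : run 0 = FMInit N)
    (hstep : ∀ i < T, FMStep E (run i) (run (i + 1)))
    (hrun : ∀ i < T, ¬ ∀ u, ((run i).matching u).isSome) :
    T ≤ N * (L + 1) := by
  classical
  -- key lemma: the counter of a minimal-counter neighbor of a free vertex is ≤ L
  have key : ∀ s : FMState N, IsMatching E s.matching →
      (∀ v, s.h v ≠ 0 → ∃ x, s.matching x = some v) →
      (∀ x v, s.matching x = some v → ∀ w, E x w → s.h v ≤ s.h w + 1) →
      ∀ u j, s.matching u = none → E u j → (∀ k, E u k → s.h j ≤ s.h k) → s.h j ≤ L := by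
    intro s hs hpos hchain u j hu hEuj hmin
    have hcard : (Finset.univ.filter (fun x => s.matching x = none)).card ≤ N := by
      have := Finset.card_filter_le Finset.univ (fun x => s.matching x = none)
      simpa using this
    obtain ⟨kk, hkkL, usp, vsp, hAp, hup0⟩ :=
      FMAux.strongClaim L haug N s.matching hs hcard u hu
    obtain ⟨hp0, hpE, hpm', hpfree, hpinj, hpvinj⟩ := hAp
    -- h (vsp (kk - i)) ≤ i
    have hb : ∀ i ≤ kk, s.h (vsp (kk - i)) ≤ i := by
      intro i
      induction i with
      | zero =>
        intro _
        rw [Nat.sub_zero]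
        by_contra hne
        obtain ⟨x, hx⟩ := hpos (vsp kk) (by omega)
        exact hpfree x hx
      | succ i IHi =>
        intro hi
        have h1 : s.matching (usp (kk - i)) = some (vsp (kk - i - 1)) := by
          have := hpm' (kk - i - 1) (by omega)
          have heq : kk - i - 1 + 1 = kk - i := by omega
          rwa [heq] at this
        have h2 : E (usp (kk - i)) (vsp (kk - i)) := hpE (kk - i) (by omega)
        have h3 := hchain _ _ h1 _ h2
        have h4 := IHi (by omega)
        have heq : kk - (i + 1) = kk - i - 1 := by omega
        rw [heq]
        omega
    have hb0 : s.h (vsp 0) ≤ kk := by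
      have := hb kk le_rfl
      rwa [Nat.sub_self] at this
    have := hmin (vsp 0) (by rw [← hup0]; exact hpE 0 (Nat.zero_le kk))
    omega
  -- invariants along the run
  have inv : ∀ i ≤ T, IsMatching E (run i).matching ∧
      (∀ v, (run i).h v ≠ 0 → ∃ x, (run i).matching x = some v) ∧
      (∀ x v, (run i).matching x = some v → ∀ w, E x w →
        (run i).h v ≤ (run i).h w + 1) ∧
      (∀ v, (run i).h v ≤ L + 1) ∧ (∑ v, (run i).h v) = i := by
    intro i
    induction i with
    | zero =>
      intro _
      rw [h0]
      refine ⟨⟨fun u j h => absurd h (by simp [FMInit]), fun u u' j h _ => absurd h (by simp [FMInit])⟩,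
        fun v hv => absurd rfl hv, fun x v h => absurd h (by simp [FMInit]),
        fun v => Nat.zero_le _, by simp [FMInit]⟩
    | succ i IHi =>
      intro hi
      obtain ⟨hmat, hpos, hchain, hbd, hsum⟩ := IHi (by omega)
      obtain ⟨u, j, hu, hEuj, hmin, hh', hm'⟩ := hstep i (by omega)
      have hjL : (run i).h j ≤ L := key (run i) hmat hpos hchain u j hu hEuj hmin
      have hm'x : ∀ x, (run (i + 1)).matching x =
          if x = u then some j
          else if (run i).matching x = some j then none else (run i).matching x := by
        intro x
        rw [hm']
      refine ⟨?_, ?_, ?_, ?_, ?_⟩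
      · constructor
        · intro x w hx
          rw [hm'x x] at hx
          by_cases hxu : x = u
          · rw [if_pos hxu] at hx
            cases hx
            rw [hxu]
            exact hEuj
          · rw [if_neg hxu] at hx
            by_cases hxj : (run i).matching x = some j
            · rw [if_pos hxj] at hx
              cases hx
            · rw [if_neg hxj] at hx
              exact hmat.1 x w hx
        · intro x x' w hx hx'
          rw [hm'x x] at hx
          rw [hm'x x'] at hx'
          by_cases hxu : x = u <;> by_cases hx'u : x' = u
          · rw [hxu, hx'u]
          · rw [if_pos hxu] at hx
            rw [if_neg hx'u] at hx'
            cases hx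
            by_cases hxj : (run i).matching x' = some j
            · rw [if_pos hxj] at hx'
              cases hx'
            · rw [if_neg hxj] at hx'
              exact absurd hx' hxj
          · rw [if_neg hxu] at hx
            rw [if_pos hx'u] at hx'
            cases hx'
            by_cases hxj : (run i).matching x = some j
            · rw [if_pos hxj] at hx
              cases hx
            · rw [if_neg hxj] at hx
              exact absurd hx hxj
          · rw [if_neg hxu] at hx
            rw [if_neg hx'u] at hx'
            by_cases hxj : (run i).matching x = some j
            · rw [if_pos hxj] at hx
              cases hx
            · rw [if_neg hxj] at hx
              by_cases hx'j : (run i).matching x' = some j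
              · rw [if_pos hx'j] at hx'
                cases hx'
              · rw [if_neg hx'j] at hx'
                exact hmat.2 x x' w hx hx'
      · intro v hv
        by_cases hvj : v = j
        · exact ⟨u, by rw [hm'x u, if_pos rfl, hvj]⟩
        · rw [hh'] at hv
          rw [Function.update_of_ne hvj] at hv
          obtain ⟨x, hx⟩ := hpos v hv
          have hxu : x ≠ u := by
            intro hc
            rw [hc, hu] at hx
            cases hx
          have hxj : (run i).matching x ≠ some j := by
            rw [hx]
            intro hc
            exact hvj (by injection hc)
          exact ⟨x, by rw [hm'x x, if_neg hxu, if_neg hxj]; exact hx⟩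
      · intro x v hx w hEw
        rw [hm'x x] at hx
        have hmono : ∀ z, (run i).h z ≤ (run (i + 1)).h z := by
          intro z
          rw [hh']
          by_cases hzj : z = j
          · rw [hzj, Function.update_self]
            omega
          · rw [Function.update_of_ne hzj]
        by_cases hxu : x = u
        · rw [if_pos hxu] at hx
          have hvj : j = v := by injection hx
          subst hvj
          have h1 : (run (i + 1)).h j = (run i).h j + 1 := by
            rw [hh', Function.update_self]
          have h2 : (run i).h j ≤ (run i).h w := hmin w (by rw [← hxu]; exact hEw)
          have := hmono w
          omega
        · rw [if_neg hxu] at hx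
          by_cases hxj : (run i).matching x = some j
          · rw [if_pos hxj] at hx
            cases hx
          · rw [if_neg hxj] at hx
            have hvj : v ≠ j := by
              intro hc
              rw [hc] at hx
              exact hxj hx
            have h1 : (run (i + 1)).h v = (run i).h v := by
              rw [hh', Function.update_of_ne hvj]
            have h2 := hchain x v hx w hEw
            have := hmono w
            omega
      · intro v
        rw [hh']
        by_cases hvj : v = j
        · rw [hvj, Function.update_self]
          omega
        · rw [Function.update_of_ne hvj]
          exact hbd v
      · rw [hh']
        rw [Finset.sum_update_of_mem (Finset.mem_univ j)]
        have herase : ∑ v, (run i).h v =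
            (run i).h j + ∑ v ∈ Finset.univ \ {j}, (run i).h v := by
          rw [Finset.sdiff_singleton_eq_erase, Finset.add_sum_erase _ _ (Finset.mem_univ j)]
        omega
  obtain ⟨-, -, -, hbd, hsum⟩ := inv T le_rfl
  have h1 : (∑ v, (run T).h v) ≤ ∑ _v : Fin N, (L + 1) :=
    Finset.sum_le_sum (fun v _ => hbd v)
  rw [hsum] at h1
  simpa [mul_comm] using h1
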